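/- Let α ∈ (1,2] and let Y be a real random variable with E[Y] = 0 and E[exp(|Y|^α)] ≤ e. Then for every λ ∈ [0,1], E[exp(λ·Y)] ≤ exp(λ^α). -/
import Mathlib


open MeasureTheory

-- Pointwise key inequality: `e^t ≤ t + e^{|t|^α}` for `1 < α ≤ 2`.
lemma exp_le_add_exp_abs_rpow (α : ℝ) (h1 : 1 < α) (h2 : α ≤ 2) (t : ℝ) :
    Real.exp t ≤ t + Real.exp (|t| ^ α) := by
  rcases le_or_gt |t| 1 with hle | hgt
  · -- small case: exp t ≤ 1 + t + t^2 and 1 + t^2 ≤ exp (|t|^α)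
    have hb := Real.exp_bound hle (n := 2) (by norm_num)
    have hsum : ∑ m ∈ Finset.range 2, t ^ m / m.factorial = 1 + t := by
      simp [Finset.sum_range_succ]
    rw [hsum] at hb
    have h1' : Real.exp t ≤ 1 + t + t ^ 2 * (3 / 4) := by
      have := (abs_le.1 hb).2
      norm_num [Nat.factorial] at this
      linarith
    have hsq : |t| ^ 2 ≤ |t| ^ α := by
      rcases eq_or_lt_of_le (abs_nonneg t) with h0 | h0
      · simp [← h0, Real.zero_rpow (by positivity : α ≠ 0)]
      · calc |t| ^ 2 = |t| ^ (2 : ℝ) := by rw [Real.rpow_two]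
          _ ≤ |t| ^ α := Real.rpow_le_rpow_of_exponent_ge h0 hle h2
    have hexp : 1 + |t| ^ α ≤ Real.exp (|t| ^ α) := by
      linarith [Real.add_one_le_exp (|t| ^ α)]
    nlinarith [sq_abs t, abs_nonneg t]
  · -- large case: |t| ≤ |t|^α
    have h1t : (1 : ℝ) ≤ |t| := hgt.le
    have habs : |t| ≤ |t| ^ α := by
      calc |t| = |t| ^ (1 : ℝ) := (Real.rpow_one _).symm
        _ ≤ |t| ^ α := Real.rpow_le_rpow_of_exponent_le h1t h1.le
    have hexp : 1 + |t| ≤ Real.exp (|t| ^ α) := by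
      have := Real.add_one_le_exp |t|
      have := Real.exp_le_exp.2 habs
      linarith
    rcases le_or_gt 0 t with ht | ht
    · have : Real.exp t ≤ Real.exp (|t| ^ α) := by
        apply Real.exp_le_exp.2
        calc t = |t| := (abs_of_nonneg ht).symm
          _ ≤ |t| ^ α := habs
      linarith
    · have : Real.exp t ≤ 1 := Real.exp_le_one_iff.2 ht.le
      have habs' : |t| = -t := abs_of_neg ht
      linarith

theorem stmt4 {Ω : Type*} [MeasurableSpace Ω] (μ : Measure Ω) [IsProbabilityMeasure μ]
    (α : ℝ) (h1 : 1 < α) (h2 : α ≤ 2)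
    (Y : Ω → ℝ) (hY : Integrable Y μ) (hmean : ∫ ω, Y ω ∂μ = 0)
    (hInt : Integrable (fun ω => Real.exp (|Y ω| ^ α)) μ)
    (hE : ∫ ω, Real.exp (|Y ω| ^ α) ∂μ ≤ Real.exp 1) :
    ∀ l ∈ Set.Icc (0 : ℝ) 1, ∫ ω, Real.exp (l * Y ω) ∂μ ≤ Real.exp (l ^ α) := by
  rintro l ⟨hl0, hl1⟩
  set s : ℝ := l ^ α with hs
  have hs0 : 0 ≤ s := Real.rpow_nonneg hl0 α
  have hs1 : s ≤ 1 := Real.rpow_le_one hl0 hl1 (by linarith)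
  -- pointwise: exp (l * Y ω) ≤ l * Y ω + (exp (|Y ω|^α)) ^ s
  have hpt : ∀ ω, Real.exp (l * Y ω) ≤ l * Y ω + (Real.exp (|Y ω| ^ α)) ^ s := by
    intro ω
    have h := exp_le_add_exp_abs_rpow α h1 h2 (l * Y ω)
    have habs : |l * Y ω| ^ α = s * |Y ω| ^ α := by
      rw [abs_mul, abs_of_nonneg hl0, Real.mul_rpow hl0 (abs_nonneg _)]
    have hrw : Real.exp (|l * Y ω| ^ α) = (Real.exp (|Y ω| ^ α)) ^ s := by
      rw [habs, mul_comm, Real.exp_mul]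
    rw [hrw] at h
    exact h
  -- integrability of the rpow term
  have hgm : AEStronglyMeasurable (fun ω => (Real.exp (|Y ω| ^ α)) ^ s) μ :=
    ((Real.continuous_rpow_const hs0).comp_aestronglyMeasurable hInt.aestronglyMeasurable)
  have hgle : ∀ ω, (Real.exp (|Y ω| ^ α)) ^ s ≤ Real.exp (|Y ω| ^ α) := by
    intro ω
    calc (Real.exp (|Y ω| ^ α)) ^ s ≤ (Real.exp (|Y ω| ^ α)) ^ (1 : ℝ) :=
          Real.rpow_le_rpow_of_exponent_le (Real.one_le_exp (by positivity)) hs1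
      _ = _ := Real.rpow_one _
  have hgpos : ∀ ω, 0 ≤ (Real.exp (|Y ω| ^ α)) ^ s := fun ω =>
    Real.rpow_nonneg (Real.exp_nonneg _) s
  have hgInt : Integrable (fun ω => (Real.exp (|Y ω| ^ α)) ^ s) μ := by
    refine hInt.mono' hgm (Filter.Eventually.of_forall fun ω => ?_)
    rw [Real.norm_eq_abs, abs_of_nonneg (hgpos ω)]
    exact hgle ω
  have hbInt : Integrable (fun ω => l * Y ω + (Real.exp (|Y ω| ^ α)) ^ s) μ :=
    (hY.const_mul l).add hgInt
  -- integrability of exp (l * Y)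
  have hfInt : Integrable (fun ω => Real.exp (l * Y ω)) μ := by
    refine hbInt.mono' ?_ (Filter.Eventually.of_forall fun ω => ?_)
    · exact (Real.continuous_exp.comp (continuous_const.mul continuous_id)).comp_aestronglyMeasurable
        hY.aestronglyMeasurable
    · rw [Real.norm_eq_abs, abs_of_nonneg (Real.exp_nonneg _)]
      exact hpt ω
  -- Jensen: ∫ (exp(|Y|^α))^s ≤ (∫ exp(|Y|^α))^s
  have hjensen : ∫ ω, (Real.exp (|Y ω| ^ α)) ^ s ∂μ ≤ (∫ ω, Real.exp (|Y ω| ^ α) ∂μ) ^ s := by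
    have hconc : ConcaveOn ℝ (Set.Ici 0) fun x : ℝ => x ^ s :=
      Real.concaveOn_rpow hs0 hs1
    exact hconc.le_map_integral ((Real.continuous_rpow_const hs0).continuousOn)
      isClosed_Ici (Filter.Eventually.of_forall fun ω => Real.exp_nonneg _) hInt hgInt
  calc ∫ ω, Real.exp (l * Y ω) ∂μ
      ≤ ∫ ω, (l * Y ω + (Real.exp (|Y ω| ^ α)) ^ s) ∂μ :=
        integral_mono hfInt hbInt hpt
    _ = l * ∫ ω, Y ω ∂μ + ∫ ω, (Real.exp (|Y ω| ^ α)) ^ s ∂μ := by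
        rw [integral_add (hY.const_mul l) hgInt, integral_const_mul]
    _ = ∫ ω, (Real.exp (|Y ω| ^ α)) ^ s ∂μ := by rw [hmean]; ring
    _ ≤ (∫ ω, Real.exp (|Y ω| ^ α) ∂μ) ^ s := hjensen
    _ ≤ (Real.exp 1) ^ s := by
        apply Real.rpow_le_rpow (integral_nonneg fun ω => Real.exp_nonneg _) hE hs0
    _ = Real.exp s := Real.exp_one_rpow s
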